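/- For every i with 0 ≤ i ≤ q − 1 and every j with 1 ≤ j ≤ q − 1, every element of the set S_{i,j} = {(iq − jq^2 + k₁)(q^3 − q + 1) + (jq^2 − i + k₂)(q^3 + 1) : k₁, k₂ integers, 0 ≤ k₁ ≤ q − 1, 0 ≤ k₂ ≤ q^3 − q − jq^2 + i} is a nonnegative integer that belongs to T but does not belong to S. -/
import Mathlib


/-- The numerical semigroup `S` generated by `q^3 - q + 1` and `q^3 + 1`. -/
def gkS (q : ℤ) : AddSubmonoid ℤ :=
  AddSubmonoid.closure {q ^ 3 - q + 1, q ^ 3 + 1}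

/-- The numerical semigroup `T` generated by `q^3 - q + 1`, `q^3 + 1` and the numbers
`q^3 + i(q^4 - q^3 - q^2 + q - 1)` for `i = 0, …, q - 1`. -/
def gkT (q : ℤ) : AddSubmonoid ℤ :=
  AddSubmonoid.closure ({q ^ 3 - q + 1, q ^ 3 + 1} ∪
    {x : ℤ | ∃ i : ℤ, 0 ≤ i ∧ i ≤ q - 1 ∧
      x = q ^ 3 + i * (q ^ 4 - q ^ 3 - q ^ 2 + q - 1)})

/-- The set `S_{i,j}`. -/
def gkSij (q i j : ℤ) : Set ℤ :=
  {x : ℤ | ∃ k₁ k₂ : ℤ, 0 ≤ k₁ ∧ k₁ ≤ q - 1 ∧ 0 ≤ k₂ ∧ k₂ ≤ q ^ 3 - q - j * q ^ 2 + i ∧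
    x = (i * q - j * q ^ 2 + k₁) * (q ^ 3 - q + 1) + (j * q ^ 2 - i + k₂) * (q ^ 3 + 1)}

/-- A nonnegative integer multiple of an element of an additive submonoid of `ℤ`
belongs to the submonoid. -/
lemma gk_mul_mem_of_nonneg {M : AddSubmonoid ℤ} {c : ℤ} (hc : c ∈ M) {n : ℤ} (hn : 0 ≤ n) :
    n * c ∈ M := by
  lift n to ℕ using hn
  simpa [nsmul_eq_mul] using M.nsmul_mem hc n

/-- Every element of `S_{i,j}` is a nonnegative integer belonging to `T` but not to `S`. -/
theorem gk_Sij_subset_T_not_S (q : ℤ) (hq : IsPrimePow q) (i j : ℤ)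
    (hi0 : 0 ≤ i) (hi1 : i ≤ q - 1) (hj0 : 1 ≤ j) (hj1 : j ≤ q - 1) :
    ∀ x ∈ gkSij q i j, 0 ≤ x ∧ x ∈ gkT q ∧ x ∉ gkS q := by
  have hq2 : 2 ≤ q := by linarith
  rintro x ⟨k₁, k₂, hk₁0, hk₁1, hk₂0, hk₂1, rfl⟩
  have ha : q ^ 3 - q + 1 ∈ gkT q := AddSubmonoid.subset_closure (by left; left; rfl)
  have hb : q ^ 3 + 1 ∈ gkT q := AddSubmonoid.subset_closure (by left; right; rfl)
  have hg0 : q ^ 3 ∈ gkT q := AddSubmonoid.subset_closure (by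
    right; exact ⟨0, le_refl 0, by linarith, by ring⟩)
  have hgi : q ^ 3 + i * (q ^ 4 - q ^ 3 - q ^ 2 + q - 1) ∈ gkT q :=
    AddSubmonoid.subset_closure (by right; exact ⟨i, hi0, hi1, rfl⟩)
  have hm : (0 : ℤ) ≤ q ^ 4 - q ^ 3 - q ^ 2 + q - 1 := by
    nlinarith [mul_nonneg (mul_nonneg (mul_nonneg (show (0:ℤ) ≤ q - 2 by linarith)
      (show (0:ℤ) ≤ q by linarith)) (show (0:ℤ) ≤ q by linarith)) (show (0:ℤ) ≤ q by linarith),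
      mul_nonneg (mul_nonneg (show (0:ℤ) ≤ q - 1 by linarith) (show (0:ℤ) ≤ q by linarith))
        (show (0:ℤ) ≤ q by linarith)]
  have hapos : (0:ℤ) < q ^ 3 - q + 1 := by
    nlinarith [mul_nonneg (mul_nonneg (show (0:ℤ) ≤ q - 1 by linarith)
      (show (0:ℤ) ≤ q by linarith)) (show (0:ℤ) ≤ q + 1 by linarith)]
  have hbpos : (0:ℤ) < q ^ 3 + 1 := by positivity
  refine ⟨?_, ?_, ?_⟩
  · nlinarith [mul_nonneg hk₁0 hapos.le, mul_nonneg hk₂0 hbpos.le,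
      mul_nonneg (show (0:ℤ) ≤ j - 1 by linarith) (show (0:ℤ) ≤ q ^ 3 by positivity),
      mul_nonneg hi0 hm]
  · have h := add_mem (add_mem (gk_mul_mem_of_nonneg ha hk₁0) (gk_mul_mem_of_nonneg hb hk₂0))
      (add_mem (gk_mul_mem_of_nonneg hg0 (show (0:ℤ) ≤ j - 1 by linarith)) hgi)
    have hx : (i * q - j * q ^ 2 + k₁) * (q ^ 3 - q + 1) + (j * q ^ 2 - i + k₂) * (q ^ 3 + 1)
        = k₁ * (q ^ 3 - q + 1) + k₂ * (q ^ 3 + 1) + ((j - 1) * q ^ 3 +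
          (q ^ 3 + i * (q ^ 4 - q ^ 3 - q ^ 2 + q - 1))) := by ring
    rw [hx]; exact h
  · intro hS
    rw [gkS, AddSubmonoid.mem_closure_pair] at hS
    obtain ⟨m, n, hmn⟩ := hS
    simp only [nsmul_eq_mul] at hmn
    have hA : i * q - j * q ^ 2 + k₁ ≤ -1 := by nlinarith
    have hB : j * q ^ 2 - i + k₂ ≤ q ^ 3 - q := by linarith
    have hm0 : (0:ℤ) ≤ (m : ℤ) := Int.natCast_nonneg m
    have hn0 : (0:ℤ) ≤ (n : ℤ) := Int.natCast_nonneg n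
    have heq : ((m : ℤ) - (i * q - j * q ^ 2 + k₁)) * (q ^ 3 - q + 1)
        = ((j * q ^ 2 - i + k₂) - (n : ℤ)) * (q ^ 3 + 1) := by linear_combination hmn
    have hcop : IsCoprime (q ^ 3 - q + 1) (q ^ 3 + 1) := ⟨q ^ 2, -(q ^ 2 - 1), by ring⟩
    have hdvd1 : (q ^ 3 - q + 1) ∣ ((j * q ^ 2 - i + k₂) - (n : ℤ)) * (q ^ 3 + 1) :=
      ⟨(m : ℤ) - (i * q - j * q ^ 2 + k₁), by linear_combination -heq⟩
    have hdvd : (q ^ 3 - q + 1) ∣ ((j * q ^ 2 - i + k₂) - (n : ℤ)) :=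
      hcop.dvd_of_dvd_mul_right hdvd1
    have hBn : 0 < (j * q ^ 2 - i + k₂) - (n : ℤ) := by
      nlinarith [heq, mul_pos (show (0:ℤ) < (m:ℤ) - (i * q - j * q ^ 2 + k₁) by linarith) hapos]
    have hge : q ^ 3 - q + 1 ≤ (j * q ^ 2 - i + k₂) - (n : ℤ) := Int.le_of_dvd hBn hdvd
    linarith
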